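/- Let p ≥ 1, let C < ∞, and let (a_k)_{k≥1} be a sequence of nonnegative random variables with E[a_k^{2p}] ≤ C for all k. Let K be a positive-integer-valued random variable such that for every q ≥ 1 there exists C_q < ∞ with P(K = j) ≤ C_q j^{−q} for all j ≥ 1. Then E[(Σ_{k=1}^K a_k)^p] < ∞. -/

import Mathlib

open MeasureTheory Real Finset

lemma aux_rpow_sum_le {p : ℝ} (hp : 1 ≤ p) (s : Finset ℕ) (x : ℕ → ℝ) (hx : ∀ i, 0 ≤ x i) :
    (∑ i ∈ s, x i) ^ p ≤ (s.card : ℝ) ^ (p - 1) * ∑ i ∈ s, x i ^ p := by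
  rcases s.eq_empty_or_nonempty with rfl | hs
  · simp [Real.zero_rpow (by linarith : p ≠ 0)]
  · have hn : (0:ℝ) < s.card := by exact_mod_cast Finset.card_pos.2 hs
    have hS : 0 ≤ ∑ i ∈ s, x i := Finset.sum_nonneg fun i _ => hx i
    have key : ((s.card:ℝ))⁻¹ ^ p * (∑ i ∈ s, x i) ^ p
        ≤ ((s.card:ℝ))⁻¹ * ∑ i ∈ s, x i ^ p := by
      calc ((s.card:ℝ))⁻¹ ^ p * (∑ i ∈ s, x i) ^ p
          = (∑ i ∈ s, (s.card:ℝ)⁻¹ * x i) ^ p := by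
            rw [← Real.mul_rpow (by positivity) hS, ← Finset.mul_sum]
        _ ≤ ∑ i ∈ s, (s.card:ℝ)⁻¹ * x i ^ p := by
            refine Real.rpow_arith_mean_le_arith_mean_rpow s _ x (fun i _ => by positivity)
              ?_ (fun i _ => hx i) hp
            rw [Finset.sum_const, nsmul_eq_mul]
            field_simp
        _ = (s.card:ℝ)⁻¹ * ∑ i ∈ s, x i ^ p := by rw [Finset.mul_sum]
    have hcp : (0:ℝ) < (s.card:ℝ) ^ p := Real.rpow_pos_of_pos hn p
    have h2 := mul_le_mul_of_nonneg_left key (le_of_lt hcp)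
    calc (∑ i ∈ s, x i) ^ p
        = (s.card:ℝ) ^ p * (((s.card:ℝ))⁻¹ ^ p * (∑ i ∈ s, x i) ^ p) := by
          rw [← mul_assoc, ← Real.mul_rpow (le_of_lt hn) (by positivity),
            mul_inv_cancel₀ (ne_of_gt hn), Real.one_rpow, one_mul]
      _ ≤ (s.card:ℝ) ^ p * (((s.card:ℝ))⁻¹ * ∑ i ∈ s, x i ^ p) := h2
      _ = (s.card:ℝ) ^ (p - 1) * ∑ i ∈ s, x i ^ p := by
          rw [Real.rpow_sub hn, Real.rpow_one]; ring

lemma aux_rpow_le_one_add (a : ℝ) (ha : 0 ≤ a) {p : ℝ} (hp : 1 ≤ p) :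
    a ^ p ≤ 1 + a ^ (2 * p) := by
  rcases le_or_gt a 1 with h | h
  · have h1 : a ^ p ≤ 1 := Real.rpow_le_one ha h (by linarith)
    have h2 : 0 ≤ a ^ (2 * p) := Real.rpow_nonneg ha _
    linarith
  · have h1 : a ^ p ≤ a ^ (2 * p) := Real.rpow_le_rpow_of_exponent_le (le_of_lt h) (by linarith)
    linarith

set_option maxHeartbeats 1000000 in
theorem stmt6 {Ω : Type*} [MeasurableSpace Ω] (μ : Measure Ω) [IsProbabilityMeasure μ]
    (p C : ℝ) (hp : 1 ≤ p) (hC : 0 ≤ C)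
    (a : ℕ → Ω → ℝ) (hma : ∀ k, Measurable (a k)) (ha0 : ∀ k ω, 0 ≤ a k ω)
    (haint : ∀ k, Integrable (fun ω => (a k ω) ^ (2 * p)) μ)
    (haC : ∀ k, ∫ ω, (a k ω) ^ (2 * p) ∂μ ≤ C)
    (K : Ω → ℕ) (hmK : Measurable K) (hK1 : ∀ ω, 1 ≤ K ω)
    (hKtail : ∀ q : ℝ, 1 ≤ q → ∃ Cq : ℝ, 0 < Cq ∧ ∀ j : ℕ, 1 ≤ j →
      (μ {ω | K ω = j}).toReal ≤ Cq * (j : ℝ) ^ (-q)) :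
    Integrable (fun ω => (∑ k ∈ Finset.Icc 1 (K ω), a k ω) ^ p) μ := by
  have hp0 : (0:ℝ) < p := lt_of_lt_of_le zero_lt_one hp
  set h : ℕ → Ω → ℝ := fun j ω => (∑ k ∈ Finset.Icc 1 j, a k ω) ^ p with hh_def
  have hmh : ∀ j, Measurable (h j) := fun j =>
    (Finset.measurable_sum _ (fun k _ => hma k)).pow measurable_const
  have hh0 : ∀ j ω, 0 ≤ h j ω := fun j ω =>
    Real.rpow_nonneg (Finset.sum_nonneg fun k _ => ha0 k ω) p
  set f : Ω → ℝ := fun ω => (∑ k ∈ Finset.Icc 1 (K ω), a k ω) ^ p with hf_def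
  have hmf : Measurable f := by
    have h1 : Measurable fun q : Ω × ℕ => h q.2 q.1 :=
      measurable_from_prod_countable_left fun j => hmh j
    exact h1.comp (measurable_id.prodMk hmK)
  have hf0 : ∀ ω, 0 ≤ f ω := fun ω => hh0 (K ω) ω
  refine ⟨hmf.aestronglyMeasurable, ?_⟩
  rw [hasFiniteIntegral_iff_ofReal (Filter.Eventually.of_forall hf0)]
  -- decompose according to the value of K
  have hSm : ∀ j : ℕ, MeasurableSet (K ⁻¹' {j}) := fun j => hmK (measurableSet_singleton j)
  have hpt : ∀ ω, ENNReal.ofReal (f ω)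
      = ∑' j, Set.indicator (K ⁻¹' {j}) (fun ω' => ENNReal.ofReal (h j ω')) ω := by
    intro ω
    rw [tsum_eq_single (K ω)]
    · rw [Set.indicator_of_mem (by simp : ω ∈ K ⁻¹' {K ω})]
    · intro j hj
      exact Set.indicator_of_notMem (by simp [Ne.symm hj]) _
  have hdecomp : ∫⁻ ω, ENNReal.ofReal (f ω) ∂μ
      = ∑' j, ∫⁻ ω in K ⁻¹' {j}, ENNReal.ofReal (h j ω) ∂μ := by
    simp_rw [hpt]
    rw [lintegral_tsum (f := fun j => (K ⁻¹' {j}).indicator (fun ω' => ENNReal.ofReal (h j ω')))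
      (fun j => (((hmh j).ennreal_ofReal).indicator (hSm j)).aemeasurable)]
    exact tsum_congr fun j => by rw [lintegral_indicator (hSm j)]
  rw [hdecomp]
  -- the tail bound with q = 2p + 4
  obtain ⟨Cq, hCq, hCqle⟩ := hKtail (2 * p + 4) (by linarith)
  -- the key per-term bound
  have key : ∀ j : ℕ, 1 ≤ j → (∫⁻ ω in K ⁻¹' {j}, ENNReal.ofReal (h j ω) ∂μ)
      ≤ ENNReal.ofReal ((Cq * C) ^ ((1:ℝ)/2) * (j:ℝ) ^ (-2:ℝ)) := by
    intro j hj
    have hjpos : (0:ℝ) < j := by exact_mod_cast hj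
    have hcard : (Finset.Icc 1 j).card = j := by simp [Nat.card_Icc]
    set b : Ω → ℝ := fun ω => (j:ℝ)^(p-1) * ∑ k ∈ Finset.Icc 1 j, a k ω ^ p with hb_def
    have hb0 : ∀ ω, 0 ≤ b ω := fun ω => mul_nonneg (Real.rpow_nonneg hjpos.le _)
      (Finset.sum_nonneg fun k _ => Real.rpow_nonneg (ha0 k ω) p)
    have hmb : Measurable b :=
      measurable_const.mul (Finset.measurable_sum _ fun k _ => (hma k).pow measurable_const)
    have hhb : ∀ ω, h j ω ≤ b ω := by
      intro ω
      have h1 := aux_rpow_sum_le hp (Finset.Icc 1 j) (fun k => a k ω) (fun k => ha0 k ω)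
      rwa [hcard] at h1
    set ind : Ω → ENNReal := (K ⁻¹' {j}).indicator (fun _ => 1) with hind_def
    set g : Ω → ENNReal := fun ω => ENNReal.ofReal (b ω) with hg_def
    have hmind : Measurable ind := measurable_const.indicator (hSm j)
    have hmg : Measurable g := hmb.ennreal_ofReal
    have step1 : (∫⁻ ω in K ⁻¹' {j}, ENNReal.ofReal (h j ω) ∂μ) ≤ ∫⁻ ω, (ind * g) ω ∂μ := by
      rw [← lintegral_indicator (hSm j)]
      refine lintegral_mono fun ω => ?_
      by_cases hω : ω ∈ K ⁻¹' {j}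
      · rw [Set.indicator_of_mem hω]
        calc ENNReal.ofReal (h j ω) ≤ g ω := ENNReal.ofReal_le_ofReal (hhb ω)
          _ = (ind * g) ω := by
              simp [hind_def, Pi.mul_apply, Set.indicator_of_mem hω]
      · rw [Set.indicator_of_notMem hω]
        exact zero_le
    have hpq : Real.HolderConjugate 2 2 := Real.HolderConjugate.two_two
    have step2 := ENNReal.lintegral_mul_le_Lp_mul_Lq μ hpq hmind.aemeasurable hmg.aemeasurable
    have step3 : (∫⁻ ω, ind ω ^ (2:ℝ) ∂μ) = μ (K ⁻¹' {j}) := by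
      have hptw : ∀ ω, ind ω ^ (2:ℝ) = ind ω := by
        intro ω
        by_cases hω : ω ∈ K ⁻¹' {j}
        · simp [hind_def, Set.indicator_of_mem hω]
        · simp [hind_def, Set.indicator_of_notMem hω,
            ENNReal.zero_rpow_of_pos (by norm_num : (0:ℝ) < 2)]
      simp_rw [hptw]
      exact lintegral_indicator_one (hSm j)
    have hsum_int : Integrable (fun ω => ∑ k ∈ Finset.Icc 1 j, a k ω ^ (2*p)) μ :=
      integrable_finset_sum _ fun k _ => haint k
    have he_int : Integrable
        (fun ω => ((j:ℝ)^(p-1))^2 * ((j:ℝ) * ∑ k ∈ Finset.Icc 1 j, a k ω ^ (2*p))) μ :=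
      (hsum_int.const_mul _).const_mul _
    have hbsq : ∀ ω, b ω ^ (2:ℝ)
        ≤ ((j:ℝ)^(p-1))^2 * ((j:ℝ) * ∑ k ∈ Finset.Icc 1 j, a k ω ^ (2*p)) := by
      intro ω
      have h2 : b ω ^ (2:ℝ) = b ω ^ (2:ℕ) := by
        rw [show ((2:ℝ)) = ((2:ℕ):ℝ) by norm_num, Real.rpow_natCast]
      rw [h2, hb_def, mul_pow]
      refine mul_le_mul_of_nonneg_left ?_ (by positivity)
      have hcs := sq_sum_le_card_mul_sum_sq (s := Finset.Icc 1 j) (f := fun k => a k ω ^ p)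
      rw [hcard] at hcs
      calc (∑ k ∈ Finset.Icc 1 j, a k ω ^ p) ^ 2
          ≤ (j:ℝ) * ∑ k ∈ Finset.Icc 1 j, (a k ω ^ p)^2 := hcs
        _ = (j:ℝ) * ∑ k ∈ Finset.Icc 1 j, a k ω ^ (2*p) := by
            congr 1
            refine Finset.sum_congr rfl fun k _ => ?_
            rw [← Real.rpow_natCast (a k ω ^ p) 2, ← Real.rpow_mul (ha0 k ω)]
            norm_num [mul_comm]
    have step4 : (∫⁻ ω, g ω ^ (2:ℝ) ∂μ) ≤ ENNReal.ofReal (C * (j:ℝ)^(2*p)) := by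
      have hg2 : ∀ ω, g ω ^ (2:ℝ) = ENNReal.ofReal (b ω ^ (2:ℝ)) := fun ω =>
        ENNReal.ofReal_rpow_of_nonneg (hb0 ω) (by norm_num)
      calc ∫⁻ ω, g ω ^ (2:ℝ) ∂μ = ∫⁻ ω, ENNReal.ofReal (b ω ^ (2:ℝ)) ∂μ := by simp_rw [hg2]
        _ ≤ ∫⁻ ω, ENNReal.ofReal
              (((j:ℝ)^(p-1))^2 * ((j:ℝ) * ∑ k ∈ Finset.Icc 1 j, a k ω ^ (2*p))) ∂μ :=
            lintegral_mono fun ω => ENNReal.ofReal_le_ofReal (hbsq ω)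
        _ = ENNReal.ofReal
              (∫ ω, ((j:ℝ)^(p-1))^2 * ((j:ℝ) * ∑ k ∈ Finset.Icc 1 j, a k ω ^ (2*p)) ∂μ) :=
            (ofReal_integral_eq_lintegral_ofReal he_int (Filter.Eventually.of_forall fun ω =>
              mul_nonneg (sq_nonneg _) (mul_nonneg hjpos.le (Finset.sum_nonneg fun k _ =>
                Real.rpow_nonneg (ha0 k ω) _)))).symm
        _ ≤ ENNReal.ofReal (C * (j:ℝ)^(2*p)) := by
            refine ENNReal.ofReal_le_ofReal ?_
            rw [integral_const_mul, integral_const_mul,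
              integral_finset_sum _ (fun k _ => haint k)]
            have hsumC : ∑ k ∈ Finset.Icc 1 j, ∫ ω, a k ω ^ (2*p) ∂μ ≤ (j:ℝ) * C := by
              calc ∑ k ∈ Finset.Icc 1 j, ∫ ω, a k ω ^ (2*p) ∂μ
                  ≤ ∑ _k ∈ Finset.Icc 1 j, C := Finset.sum_le_sum fun k _ => haC k
                _ = (j:ℝ) * C := by rw [Finset.sum_const, hcard, nsmul_eq_mul]
            have hjj : ((j:ℝ)^(p-1))^2 * ((j:ℝ) * ((j:ℝ) * C)) = C * (j:ℝ)^(2*p) := by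
              rw [← Real.rpow_natCast ((j:ℝ)^(p-1)) 2, ← Real.rpow_mul hjpos.le]
              rw [show 2*p = ((p-1) * ((2:ℕ):ℝ)) + 2 by push_cast; ring]
              rw [Real.rpow_add hjpos, show ((2:ℝ)) = ((2:ℕ):ℝ) by norm_num,
                Real.rpow_natCast]
              ring
            calc ((j:ℝ)^(p-1))^2 * ((j:ℝ) * ∑ k ∈ Finset.Icc 1 j, ∫ ω, a k ω ^ (2*p) ∂μ)
                ≤ ((j:ℝ)^(p-1))^2 * ((j:ℝ) * ((j:ℝ) * C)) :=
                  mul_le_mul_of_nonneg_left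
                    (mul_le_mul_of_nonneg_left hsumC hjpos.le) (sq_nonneg _)
              _ = C * (j:ℝ)^(2*p) := hjj
    have hmuS : μ (K ⁻¹' {j}) ≤ ENNReal.ofReal (Cq * (j:ℝ)^(-(2*p+4))) := by
      have h1 := hCqle j hj
      calc μ (K ⁻¹' {j})
          = ENNReal.ofReal ((μ (K ⁻¹' {j})).toReal) :=
            (ENNReal.ofReal_toReal (measure_ne_top μ _)).symm
        _ ≤ ENNReal.ofReal (Cq * (j:ℝ)^(-(2*p+4))) := ENNReal.ofReal_le_ofReal h1
    have h1n : (0:ℝ) ≤ Cq * (j:ℝ)^(-(2*p+4)) :=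
      mul_nonneg hCq.le (Real.rpow_nonneg hjpos.le _)
    have h2n : (0:ℝ) ≤ C * (j:ℝ)^(2*p) := mul_nonneg hC (Real.rpow_nonneg hjpos.le _)
    have hfinal : (μ (K ⁻¹' {j})) ^ ((1:ℝ)/2) * (∫⁻ ω, g ω ^ (2:ℝ) ∂μ) ^ ((1:ℝ)/2)
        ≤ ENNReal.ofReal ((Cq * C) ^ ((1:ℝ)/2) * (j:ℝ) ^ (-2:ℝ)) := by
      calc (μ (K ⁻¹' {j})) ^ ((1:ℝ)/2) * (∫⁻ ω, g ω ^ (2:ℝ) ∂μ) ^ ((1:ℝ)/2)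
          ≤ (ENNReal.ofReal (Cq * (j:ℝ)^(-(2*p+4)))) ^ ((1:ℝ)/2)
              * (ENNReal.ofReal (C * (j:ℝ)^(2*p))) ^ ((1:ℝ)/2) :=
            mul_le_mul' (ENNReal.rpow_le_rpow hmuS (by norm_num))
              (ENNReal.rpow_le_rpow step4 (by norm_num))
        _ = ENNReal.ofReal ((Cq * (j:ℝ)^(-(2*p+4))) ^ ((1:ℝ)/2)
              * (C * (j:ℝ)^(2*p)) ^ ((1:ℝ)/2)) := by
            rw [ENNReal.ofReal_rpow_of_nonneg h1n (by norm_num),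
              ENNReal.ofReal_rpow_of_nonneg h2n (by norm_num),
              ENNReal.ofReal_mul (Real.rpow_nonneg h1n _)]
        _ = ENNReal.ofReal ((Cq * C) ^ ((1:ℝ)/2) * (j:ℝ) ^ (-2:ℝ)) := by
            congr 1
            rw [← Real.mul_rpow h1n h2n,
              show Cq * (j:ℝ)^(-(2*p+4)) * (C * (j:ℝ)^(2*p))
                = (Cq*C) * ((j:ℝ)^(-(2*p+4)) * (j:ℝ)^(2*p)) by ring,
              ← Real.rpow_add hjpos, show -(2*p+4) + 2*p = (-4:ℝ) by ring,
              Real.mul_rpow (mul_nonneg hCq.le hC) (Real.rpow_nonneg hjpos.le _),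
              ← Real.rpow_mul hjpos.le]
            norm_num
    calc (∫⁻ ω in K ⁻¹' {j}, ENNReal.ofReal (h j ω) ∂μ)
        ≤ ∫⁻ ω, (ind * g) ω ∂μ := step1
      _ ≤ (∫⁻ ω, ind ω ^ (2:ℝ) ∂μ) ^ ((1:ℝ)/2) * (∫⁻ ω, g ω ^ (2:ℝ) ∂μ) ^ ((1:ℝ)/2) := step2
      _ = (μ (K ⁻¹' {j})) ^ ((1:ℝ)/2) * (∫⁻ ω, g ω ^ (2:ℝ) ∂μ) ^ ((1:ℝ)/2) := by rw [step3]
      _ ≤ _ := hfinal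
  have key0 : (∫⁻ ω in K ⁻¹' {(0:ℕ)}, ENNReal.ofReal (h 0 ω) ∂μ) = 0 := by
    have hempty : K ⁻¹' {(0:ℕ)} = ∅ := by
      ext ω
      simp only [Set.mem_preimage, Set.mem_singleton_iff, Set.mem_empty_iff_false, iff_false]
      have := hK1 ω; omega
    rw [hempty, Measure.restrict_empty, lintegral_zero_measure]
  have hu0 : ∀ j : ℕ, 0 ≤ (Cq * C) ^ ((1:ℝ)/2) * (j:ℝ) ^ (-2:ℝ) := fun j =>
    mul_nonneg (Real.rpow_nonneg (mul_nonneg hCq.le hC) _)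
      (Real.rpow_nonneg (Nat.cast_nonneg j) _)
  have husum : Summable (fun j : ℕ => (Cq * C) ^ ((1:ℝ)/2) * (j:ℝ) ^ (-2:ℝ)) :=
    (Real.summable_nat_rpow.2 (by norm_num)).mul_left _
  calc ∑' j, ∫⁻ ω in K ⁻¹' {j}, ENNReal.ofReal (h j ω) ∂μ
      ≤ ∑' j : ℕ, ENNReal.ofReal ((Cq * C) ^ ((1:ℝ)/2) * (j:ℝ) ^ (-2:ℝ)) := by
        refine ENNReal.tsum_le_tsum fun j => ?_
        rcases Nat.eq_zero_or_pos j with rfl | hj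
        · rw [key0]; exact zero_le
        · exact key j hj
    _ = ENNReal.ofReal (∑' j : ℕ, (Cq * C) ^ ((1:ℝ)/2) * (j:ℝ) ^ (-2:ℝ)) :=
        (ENNReal.ofReal_tsum_of_nonneg hu0 husum).symm
    _ < ⊤ := ENNReal.ofReal_lt_top
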